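/- Let S = E^N ∩ {v}^⊥ where v is a spacelike unit vector in L^{N+2}. Then under the isometry Ψ = Ψ_{p0,w,A} : R^N → E^N, the preimage Ψ^{-1}(S) is a hyperplane in R^N if and only if ⟨v,w⟩ = 0, and if ⟨v,w⟩ = h ≠ 0 then Ψ^{-1}(S) is a Euclidean sphere of radius 1/|h|. -/

import Mathlib

open scoped RealInnerProductSpace
noncomputable section

def minkL {k : ℕ} (x y : EuclideanSpace ℝ (Fin (k + 1))) : ℝ :=
  (∑ i : Fin k, x i.castSucc * y i.castSucc) - x (Fin.last k) * y (Fin.last k)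

lemma minkL_symm {k : ℕ} (x y : EuclideanSpace ℝ (Fin (k+1))) : minkL x y = minkL y x := by
  simp [minkL, mul_comm]

lemma minkL_add_left {k : ℕ} (x y z : EuclideanSpace ℝ (Fin (k+1))) :
    minkL (x + y) z = minkL x z + minkL y z := by
  simp [minkL, add_mul, Finset.sum_add_distrib]; ring

lemma minkL_smul_left {k : ℕ} (r : ℝ) (x z : EuclideanSpace ℝ (Fin (k+1))) :
    minkL (r • x) z = r * minkL x z := by
  simp [minkL, Finset.mul_sum, mul_assoc, mul_sub]

lemma minkL_sub_left {k : ℕ} (x y z : EuclideanSpace ℝ (Fin (k+1))) :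
    minkL (x - y) z = minkL x z - minkL y z := by
  simp [minkL, sub_mul, Finset.sum_sub_distrib]; ring

lemma minkL_add_right {k : ℕ} (x y z : EuclideanSpace ℝ (Fin (k+1))) :
    minkL z (x + y) = minkL z x + minkL z y := by
  rw [minkL_symm, minkL_add_left, minkL_symm x z, minkL_symm y z]

lemma minkL_smul_right {k : ℕ} (r : ℝ) (x z : EuclideanSpace ℝ (Fin (k+1))) :
    minkL z (r • x) = r * minkL z x := by
  rw [minkL_symm, minkL_smul_left, minkL_symm]

/-- for a spacelike unit vector `v`, the preimage under `Ψ` of the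
hypersphere `S = E^N ∩ {v}ᗮ` is a hyperplane in `ℝ^N` iff `⟨v,w⟩ = 0`, and if
`⟨v,w⟩ = h ≠ 0` it is a Euclidean sphere of radius `1/|h|`. -/
theorem hypersphere_in_light_cone_model (N : ℕ) (hN : 1 ≤ N)
    (w p0 : EuclideanSpace ℝ (Fin (N + 2)))
    (A : EuclideanSpace ℝ (Fin N) →ₗ[ℝ] EuclideanSpace ℝ (Fin (N + 2)))
    (hw : minkL w w = 0) (hp0 : minkL p0 p0 = 0) (hp0w : minkL p0 w = 1)
    (hA : ∀ x y, minkL (A x) (A y) = ⟪x, y⟫)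
    (hAp0 : ∀ x, minkL (A x) p0 = 0) (hAw : ∀ x, minkL (A x) w = 0)
    (hAsurj : ∀ z, minkL z p0 = 0 → minkL z w = 0 → z ∈ Set.range A)
    (v : EuclideanSpace ℝ (Fin (N + 2))) (hv : minkL v v = 1) :
    ∀ Ψ : EuclideanSpace ℝ (Fin N) → EuclideanSpace ℝ (Fin (N + 2)),
      (Ψ = fun x => p0 + A x - (‖x‖ ^ 2 / 2) • w) →
      (((∃ (a : EuclideanSpace ℝ (Fin N)) (b : ℝ), a ≠ 0 ∧
          {x | minkL (Ψ x) v = 0} = {x | ⟪a, x⟫ = b}) ↔ minkL v w = 0) ∧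
        (∀ h : ℝ, minkL v w = h → h ≠ 0 →
          ∃ c, {x | minkL (Ψ x) v = 0} = Metric.sphere c (1 / |h|))) := by
  intro Ψ hΨ
  set h : ℝ := minkL v w with hh
  set β : ℝ := minkL v p0 with hβ
  -- decompose v
  obtain ⟨a, hAa⟩ : v - h • p0 - β • w ∈ Set.range A := by
    apply hAsurj
    · simp [minkL_sub_left, minkL_smul_left, hp0, minkL_symm w p0, hp0w, hβ]
    · simp [minkL_sub_left, minkL_smul_left, hw, hp0w, hh]
  have hv' : v = A a + h • p0 + β • w := by rw [hAa]; abel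
  have hvAx : ∀ x, minkL (A x) v = ⟪x, a⟫ := by
    intro x
    rw [hv', minkL_add_right, minkL_add_right, minkL_smul_right, minkL_smul_right,
      hA, hAp0, hAw]; ring
  have hvp0 : minkL p0 v = β := by
    rw [hv', minkL_add_right, minkL_add_right, minkL_smul_right, minkL_smul_right,
      minkL_symm p0 (A a), hAp0, hp0, hp0w]; ring
  have hvw' : minkL w v = h := by rw [minkL_symm]
  have key : ∀ x, minkL (Ψ x) v = β + ⟪a, x⟫ - ‖x‖ ^ 2 / 2 * h := by
    intro x
    rw [hΨ]
    simp only []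
    rw [minkL_sub_left, minkL_add_left, minkL_smul_left, hvAx, hvp0, hvw',
      real_inner_comm]
  have hnorm : ‖a‖ ^ 2 + 2 * h * β = 1 := by
    have := hv
    rw [hv'] at this
    rw [minkL_add_left, minkL_add_left, minkL_smul_left, minkL_smul_left,
      minkL_add_right, minkL_add_right, minkL_add_right, minkL_add_right,
      minkL_add_right, minkL_add_right, minkL_smul_right, minkL_smul_right,
      minkL_smul_right, minkL_smul_right, minkL_smul_right, minkL_smul_right,
      hA, hAp0, hAw, minkL_symm p0 (A a), minkL_symm w (A a), hAp0, hAw,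
      hp0, hw, hp0w, minkL_symm w p0, hp0w, real_inner_self_eq_norm_sq] at this
    linarith
  -- sphere part
  have sph : ∀ h' : ℝ, minkL v w = h' → h' ≠ 0 →
      ∃ c, {x | minkL (Ψ x) v = 0} = Metric.sphere c (1 / |h'|) := by
    rintro h' rfl hne
    have h2 : h ≠ 0 := hne
    refine ⟨h⁻¹ • a, ?_⟩
    ext x
    simp only [Set.mem_setOf_eq, Metric.mem_sphere, key, dist_eq_norm]
    rw [← pow_left_inj₀ (norm_nonneg _) (by positivity) two_ne_zero]
    rw [norm_sub_sq_real, inner_smul_right, norm_smul, norm_inv, Real.norm_eq_abs,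
      mul_pow, div_pow, one_pow, inv_pow, sq_abs]
    have hA2 : ‖a‖ ^ 2 = 1 - 2 * h * β := by linarith
    have hco : (⟪x, a⟫ : ℝ) = ⟪a, x⟫ := real_inner_comm a x
    rw [hA2]
    have hinv : h * h⁻¹ = 1 := mul_inv_cancel₀ h2
    constructor
    · intro hx
      linear_combination (-2 * h⁻¹) * hx + (-‖x‖ ^ 2 - 2 * β * h⁻¹) * hinv + (-2 * h⁻¹) * hco
    · intro hx
      linear_combination (-h / 2) * hx + (-(β + ⟪x, a⟫) - β * h * h⁻¹) * hinv + (-1 : ℝ) * hco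
  refine ⟨⟨?_, ?_⟩, sph⟩
  · rintro ⟨a', b, ha', hset⟩
    by_contra hne
    obtain ⟨c, hc⟩ := sph h rfl hne
    rw [hset] at hc
    have hr : (0:ℝ) < 1 / |h| := by positivity
    have hna : (0:ℝ) < ‖a'‖ := norm_pos_iff.mpr ha'
    set e : EuclideanSpace ℝ (Fin N) := ‖a'‖⁻¹ • a' with he
    have hee : ‖e‖ = 1 := by rw [he, norm_smul, norm_inv, norm_norm]; field_simp
    have hmem1 : c + (1/|h|) • e ∈ Metric.sphere c (1/|h|) := by
      simp [dist_eq_norm, norm_smul, hee, abs_of_pos hr]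
    have hmem2 : c - (1/|h|) • e ∈ Metric.sphere c (1/|h|) := by
      simp [dist_eq_norm, norm_smul, hee, abs_of_pos hr]
    rw [← hc] at hmem1 hmem2
    simp only [Set.mem_setOf_eq, inner_add_right, inner_sub_right, inner_smul_right] at hmem1 hmem2
    have hae : ⟪a', e⟫ = ‖a'‖ := by
      rw [he, inner_smul_right, real_inner_self_eq_norm_sq]
      field_simp
    rw [hae] at hmem1 hmem2
    have : 1/|h| * ‖a'‖ = 0 := by linarith
    exact absurd this (by positivity)
  · intro h0
    have hz : h = 0 := hh.trans h0
    refine ⟨a, -β, ?_, ?_⟩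
    · intro ha
      rw [ha, norm_zero, hz] at hnorm
      norm_num at hnorm
    · ext x
      simp only [Set.mem_setOf_eq, key, hz, mul_zero, sub_zero]
      constructor <;> intro hx <;> linarith [hx]
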